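/- Let (X,φ) be an expansive dynamical system and p a synchronizing periodic point. Then for any x ∈ X: p ∼_s x if and only if p ∼_lcs x, and p ∼_u x if and only if p ∼_lcu x. That is, the stable equivalence class of p equals its stable local conjugacy class, and likewise for unstable. -/

import Mathlib

set_option linter.unusedSectionVars false
set_option maxHeartbeats 1000000

open Filter Topology Set

namespace Paper

variable {X : Type*} [MetricSpace X] [CompactSpace X]

/-- The `n`-th iterate (for `n : ℤ`) of the homeomorphism `φ`. -/
def It (φ : X ≃ₜ X) (n : ℤ) : X → X := fun x => (φ.toEquiv ^ n) x

/-- The local stable set `Xˢ(x, ε)`. -/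
def locS (φ : X ≃ₜ X) (x : X) (ε : ℝ) : Set X :=
  {y | ∀ n : ℕ, dist (It φ n x) (It φ n y) ≤ ε}

/-- The local unstable set `Xᵘ(x, ε)`. -/
def locU (φ : X ≃ₜ X) (x : X) (ε : ℝ) : Set X :=
  {y | ∀ n : ℕ, dist (It φ (-(n : ℤ)) x) (It φ (-(n : ℤ)) y) ≤ ε}

/-- The set `D_ε` on which the bracket is defined. -/
def Dset (φ : X ≃ₜ X) (ε : ℝ) : Set (X × X) :=
  {p | (locS φ p.1 ε ∩ locU φ p.2 ε).Nonempty}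

/-- `(X, φ)` is expansive with expansiveness constant `εX`. -/
def IsExpansive (φ : X ≃ₜ X) (εX : ℝ) : Prop :=
  0 < εX ∧ ∀ x y : X, (∀ n : ℤ, dist (It φ n x) (It φ n y) ≤ εX) → x = y

/-- The metric is adapted (Fried), with constants `η` and `lam`. -/
def IsAdapted (φ : X ≃ₜ X) (η lam : ℝ) : Prop :=
  0 < η ∧ 0 < lam ∧ lam < 1 ∧
    (∀ x y : X, y ∈ locS φ x η → dist (φ x) (φ y) ≤ lam * dist x y) ∧
    (∀ x y : X, y ∈ locU φ x η → dist (φ.symm x) (φ.symm y) ≤ lam * dist x y)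

/-- `p` is a periodic point of `φ`. -/
def IsPeriodic (φ : X ≃ₜ X) (p : X) : Prop :=
  ∃ n : ℕ, 1 ≤ n ∧ It φ n p = p

/-- `x` is a synchronizing point: `(x, x)` is in the interior of `D_ε` for
some `0 < ε ≤ ε₀`. -/
def IsSyncPt (φ : X ≃ₜ X) (ε₀ : ℝ) (x : X) : Prop :=
  ∃ ε : ℝ, 0 < ε ∧ ε ≤ ε₀ ∧ (x, x) ∈ interior (Dset φ ε)

/-- `(X, φ)` is irreducible. -/
def Irred (φ : X ≃ₜ X) : Prop :=
  ∀ U V : Set X, IsOpen U → IsOpen V → U.Nonempty → V.Nonempty →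
    ∃ n : ℕ, 0 < n ∧ (It φ n '' U ∩ V).Nonempty

/-- `(X, φ)` is mixing. -/
def Mixing (φ : X ≃ₜ X) : Prop :=
  ∀ U V : Set X, IsOpen U → IsOpen V → U.Nonempty → V.Nonempty →
    ∃ N : ℕ, ∀ n : ℕ, N ≤ n → (It φ n '' U ∩ V).Nonempty

/-- Every point of `(X, φ)` is non-wandering. -/
def NonWandering (φ : X ≃ₜ X) : Prop :=
  ∀ x : X, ∀ U ∈ 𝓝 x, ∃ n : ℕ, 0 < n ∧ (It φ n '' U ∩ U).Nonempty

/-- Stable equivalence `x ∼ₛ y`. -/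
def StableEq (φ : X ≃ₜ X) (x y : X) : Prop :=
  Tendsto (fun n : ℕ => dist (It φ n x) (It φ n y)) atTop (𝓝 0)

/-- Unstable equivalence `x ∼ᵤ y`. -/
def UnstableEq (φ : X ≃ₜ X) (x y : X) : Prop :=
  Tendsto (fun n : ℕ => dist (It φ (-(n : ℤ)) x) (It φ (-(n : ℤ)) y)) atTop (𝓝 0)

/-- Local conjugacy `x ∼_lc y`: a homeomorphism `γ : U → V` of open
neighborhoods with `γ x = y` and `sup_{z ∈ U} d(φⁿ z, φⁿ (γ z)) → 0` as
`n → ±∞`. -/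
def LocConj (φ : X ≃ₜ X) (x y : X) : Prop :=
  ∃ (U V : Set X) (γ γinv : X → X),
    IsOpen U ∧ IsOpen V ∧ x ∈ U ∧ y ∈ V ∧ γ x = y ∧
    Set.MapsTo γ U V ∧ Set.MapsTo γinv V U ∧
    (∀ z ∈ U, γinv (γ z) = z) ∧ (∀ w ∈ V, γ (γinv w) = w) ∧
    ContinuousOn γ U ∧ ContinuousOn γinv V ∧
    (∀ ε : ℝ, 0 < ε → ∃ N : ℕ, ∀ n : ℤ, (N : ℤ) ≤ |n| → ∀ z ∈ U,
      dist (It φ n z) (It φ n (γ z)) ≤ ε)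

/-- Stable local conjugacy `x ∼_lcs y`: a homeomorphism of `Xᵘ(x, δ)` onto
its image in `Xᵘ(y, δ')` sending `x` to `y`, uniformly asymptotic in forward
time. -/
def StableLC (φ : X ≃ₜ X) (x y : X) : Prop :=
  ∃ (δ δ' : ℝ) (γ : X → X), 0 < δ ∧ 0 < δ' ∧
    Set.MapsTo γ (locU φ x δ) (locU φ y δ') ∧
    Set.InjOn γ (locU φ x δ) ∧ ContinuousOn γ (locU φ x δ) ∧ γ x = y ∧
    (∀ ε : ℝ, 0 < ε → ∃ N : ℕ, ∀ n : ℕ, N ≤ n → ∀ z ∈ locU φ x δ,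
      dist (It φ n z) (It φ n (γ z)) ≤ ε)

/-- Unstable local conjugacy `x ∼_lcu y`: a homeomorphism of `Xˢ(x, δ)` onto
its image in `Xˢ(y, δ')` sending `x` to `y`, uniformly asymptotic in backward
time. -/
def UnstableLC (φ : X ≃ₜ X) (x y : X) : Prop :=
  ∃ (δ δ' : ℝ) (γ : X → X), 0 < δ ∧ 0 < δ' ∧
    Set.MapsTo γ (locS φ x δ) (locS φ y δ') ∧
    Set.InjOn γ (locS φ x δ) ∧ ContinuousOn γ (locS φ x δ) ∧ γ x = y ∧
    (∀ ε : ℝ, 0 < ε → ∃ N : ℕ, ∀ n : ℕ, N ≤ n → ∀ z ∈ locS φ x δ,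
      dist (It φ (-(n : ℤ)) z) (It φ (-(n : ℤ)) (γ z)) ≤ ε)

/-! ### Auxiliary lemmas -/

lemma It_add (φ : X ≃ₜ X) (m n : ℤ) (x : X) : It φ (m + n) x = It φ m (It φ n x) := by
  simp [It, zpow_add, Equiv.Perm.mul_apply]

lemma It_zero (φ : X ≃ₜ X) (x : X) : It φ 0 x = x := rfl

lemma It_one (φ : X ≃ₜ X) (x : X) : It φ 1 x = φ x := by simp [It, zpow_one]

lemma It_succ (φ : X ≃ₜ X) (n : ℤ) (x : X) : It φ (n + 1) x = φ (It φ n x) := by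
  rw [add_comm, It_add, It_one]

lemma It_pred (φ : X ≃ₜ X) (n : ℤ) (x : X) : It φ (n - 1) x = φ.symm (It φ n x) := by
  apply φ.injective
  rw [← It_one, ← It_add]
  simp [Homeomorph.apply_symm_apply]

lemma It_continuous (φ : X ≃ₜ X) (n : ℤ) : Continuous (It φ n) := by
  induction n using Int.induction_on with
  | zero => exact continuous_id
  | succ k ih =>
      have : It φ (k + 1) = fun x => φ (It φ k x) := funext fun x => It_succ φ k x
      rw [this]; exact φ.continuous.comp ih
  | pred k ih =>
      have : It φ (-k - 1) = fun x => φ.symm (It φ (-k) x) := funext fun x => It_pred φ (-k) x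
      rw [this]; exact φ.symm.continuous.comp ih

lemma It_symm (φ : X ≃ₜ X) (n : ℤ) (x : X) : It φ.symm n x = It φ (-n) x := by
  have h : φ.symm.toEquiv = (φ.toEquiv)⁻¹ := rfl
  simp [It, h, inv_zpow, zpow_neg]

lemma locS_symm (φ : X ≃ₜ X) (x : X) (ε : ℝ) : locS φ.symm x ε = locU φ x ε := by
  ext y; simp only [locS, locU, mem_setOf_eq, It_symm]

lemma locU_symm (φ : X ≃ₜ X) (x : X) (ε : ℝ) : locU φ.symm x ε = locS φ x ε := by
  ext y; simp only [locS, locU, mem_setOf_eq, It_symm, neg_neg]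

lemma unstableEq_iff (φ : X ≃ₜ X) (p x : X) : UnstableEq φ p x ↔ StableEq φ.symm p x := by
  unfold UnstableEq StableEq; simp_rw [It_symm]

lemma unstableLC_iff (φ : X ≃ₜ X) (p x : X) : UnstableLC φ p x ↔ StableLC φ.symm p x := by
  unfold UnstableLC StableLC; simp_rw [It_symm, locU_symm]

lemma exp_symm {φ : X ≃ₜ X} {εX : ℝ} (h : IsExpansive φ εX) : IsExpansive φ.symm εX :=
  ⟨h.1, fun x y hxy => h.2 x y fun n => by simpa [It_symm, neg_neg] using hxy (-n)⟩

lemma ad_symm {φ : X ≃ₜ X} {η lam : ℝ} (h : IsAdapted φ η lam) : IsAdapted φ.symm η lam := by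
  obtain ⟨h1, h2, h3, h4, h5⟩ := h
  refine ⟨h1, h2, h3, ?_, ?_⟩
  · intro x y hy; rw [locS_symm] at hy; exact h5 x y hy
  · intro x y hy; rw [locU_symm] at hy; simpa using h4 x y hy

lemma per_symm {φ : X ≃ₜ X} {p : X} (h : IsPeriodic φ p) : IsPeriodic φ.symm p := by
  obtain ⟨n, hn1, hn⟩ := h
  refine ⟨n, hn1, ?_⟩
  rw [It_symm]
  have h2 := congrArg (It φ (-(n : ℤ))) hn
  rw [← It_add] at h2
  simpa [It_zero] using h2.symm

lemma sync_symm {φ : X ≃ₜ X} {e : ℝ} {p : X} (h : IsSyncPt φ e p) : IsSyncPt φ.symm e p := by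
  obtain ⟨ε, h1, h2, h3⟩ := h
  refine ⟨ε, h1, h2, ?_⟩
  have hset : Dset φ.symm ε = Prod.swap ⁻¹' (Dset φ ε) := by
    ext z
    simp only [Dset, mem_setOf_eq, mem_preimage, locS_symm, locU_symm, Prod.fst_swap,
      Prod.snd_swap]
    rw [inter_comm]
  rw [hset]
  have hhom : (Prod.swap : X × X → X × X) ⁻¹' interior (Dset φ ε)
      = interior ((Prod.swap : X × X → X × X) ⁻¹' Dset φ ε) := by
    exact (Homeomorph.prodComm X X).preimage_interior (Dset φ ε)
  rw [← hhom]
  exact h3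

lemma exists_delta0 (φ : X ≃ₜ X) (N : ℕ) {δ : ℝ} (hδ : 0 < δ) :
    ∃ δ₀ : ℝ, 0 < δ₀ ∧ δ₀ ≤ δ ∧ ∀ m : ℕ, m ≤ N → ∀ a b : X, dist a b ≤ δ₀ →
      dist (It φ m a) (It φ m b) ≤ δ := by
  induction N with
  | zero =>
      refine ⟨δ, hδ, le_rfl, ?_⟩
      intro m hm a b hab
      have : m = 0 := Nat.le_zero.mp hm
      subst this
      simpa [It_zero] using hab
  | succ N ih =>
      obtain ⟨δ₀, h1, h2, h3⟩ := ih
      have uc : UniformContinuous (It φ ((N + 1 : ℕ) : ℤ)) :=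
        CompactSpace.uniformContinuous_of_continuous (It_continuous _ _)
      obtain ⟨δ₁, hδ₁pos, hδ₁⟩ := Metric.uniformContinuous_iff.mp uc δ hδ
      refine ⟨min δ₀ (δ₁ / 2), by positivity, le_trans (min_le_left _ _) h2, ?_⟩
      intro m hm a b hab
      rcases Nat.lt_or_ge m (N + 1) with h | h
      · exact h3 m (by omega) a b (le_trans hab (min_le_left _ _))
      · have hmeq : m = N + 1 := by omega
        subst hmeq
        exact (hδ₁ (lt_of_le_of_lt (le_trans hab (min_le_right _ _)) (by linarith))).le

lemma locS_contract {φ : X ≃ₜ X} {η lam : ℝ} (had : IsAdapted φ η lam) {y w : X} {ε : ℝ}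
    (hε : ε ≤ η) (hw : w ∈ locS φ y ε) :
    ∀ m : ℕ, dist (It φ m y) (It φ m w) ≤ lam ^ m * dist y w := by
  intro m
  induction m with
  | zero => simp [It_zero]
  | succ m ih =>
      have hmem : It φ m w ∈ locS φ (It φ m y) η := by
        intro n
        have := hw (n + m)
        rw [show ((n + m : ℕ) : ℤ) = (n : ℤ) + (m : ℤ) by push_cast; ring, It_add, It_add] at this
        exact le_trans this hε
      have hstep := had.2.2.2.1 _ _ hmem
      have hcast : ∀ z : X, It φ ((m + 1 : ℕ) : ℤ) z = φ (It φ m z) := by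
        intro z
        rw [show ((m + 1 : ℕ) : ℤ) = (m : ℤ) + 1 by push_cast; ring, It_succ]
      rw [hcast, hcast]
      calc dist (φ (It φ m y)) (φ (It φ m w)) ≤ lam * dist (It φ m y) (It φ m w) := hstep
        _ ≤ lam * (lam ^ m * dist y w) := by
            exact mul_le_mul_of_nonneg_left ih (le_of_lt had.2.1)
        _ = lam ^ (m + 1) * dist y w := by ring

lemma sLC_to_sEq (φ : X ≃ₜ X) (p x : X) (h : StableLC φ p x) : StableEq φ p x := by
  obtain ⟨δ, δ', γ, hδ, hδ', hmap, hinj, hcont, hγp, hasym⟩ := h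
  rw [StableEq, Metric.tendsto_atTop]
  intro ε hε
  obtain ⟨N, hN⟩ := hasym (ε / 2) (by linarith)
  refine ⟨N, fun n hn => ?_⟩
  have hpmem : p ∈ locU φ p δ := fun n => by simp [dist_self]; positivity
  have h2 := hN n hn p hpmem
  rw [hγp] at h2
  rw [Real.dist_eq, sub_zero, abs_of_nonneg dist_nonneg]
  linarith

lemma sEq_to_sLC (φ : X ≃ₜ X) (εX η lam : ℝ) (hexp : IsExpansive φ εX)
    (had : IsAdapted φ η lam) (p : X) (hp : IsPeriodic φ p)
    (hps : IsSyncPt φ (min η (εX / 2)) p) (x : X) (h : StableEq φ p x) :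
    StableLC φ p x := by
  classical
  obtain ⟨εXpos, hexp2⟩ := hexp
  obtain ⟨r, hr1, hrp⟩ := hp
  obtain ⟨ε, εpos, εle, hint⟩ := hps
  have lampos := had.2.1
  have lamlt := had.2.2.1
  have hεη : ε ≤ η := le_trans εle (min_le_left _ _)
  have hεX : 2 * ε ≤ εX := by
    have := le_trans εle (min_le_right _ _); linarith
  -- a ball around (p,p) inside Dset
  have hnhds : Dset φ ε ∈ 𝓝 (p, p) := mem_interior_iff_mem_nhds.mp hint
  obtain ⟨δ₁, δ₁pos, hball⟩ := Metric.mem_nhds_iff.mp hnhds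
  set δ : ℝ := min (δ₁ / 2) ε with hδdef
  have δpos : 0 < δ := lt_min (by linarith) εpos
  have δle : δ ≤ ε := min_le_right _ _
  have hD : ∀ a b : X, dist a p ≤ δ → dist b p ≤ δ → (locS φ a ε ∩ locU φ b ε).Nonempty := by
    intro a b ha hb
    have h1 : dist a p < δ₁ := lt_of_le_of_lt (le_trans ha (min_le_left _ _)) (by linarith)
    have h2 : dist b p < δ₁ := lt_of_le_of_lt (le_trans hb (min_le_left _ _)) (by linarith)
    have hmem : (a, b) ∈ Dset φ ε := hball (by rw [Metric.mem_ball, Prod.dist_eq]; exact max_lt h1 h2)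
    exact hmem
  -- choose N, a multiple of the period, past which forward orbits are δ-close
  obtain ⟨N₁, hN₁⟩ := (Metric.tendsto_atTop.mp h) (min ε δ) (lt_min εpos δpos)
  set N : ℕ := r * N₁ with hNdef
  have hNN₁ : N₁ ≤ N := Nat.le_mul_of_pos_left N₁ (by omega)
  have hdN : ∀ n : ℕ, N ≤ n → dist (It φ n p) (It φ n x) ≤ min ε δ := by
    intro n hn
    have := hN₁ n (le_trans hNN₁ hn)
    rw [Real.dist_eq, sub_zero, abs_of_nonneg dist_nonneg] at this
    exact this.le
  have hItmul : ∀ k : ℕ, It φ ((r * k : ℕ) : ℤ) p = p := by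
    intro k
    induction k with
    | zero => simp [It_zero]
    | succ k ih =>
        have : ((r * (k + 1) : ℕ) : ℤ) = ((r * k : ℕ) : ℤ) + ((r : ℕ) : ℤ) := by push_cast; ring
        rw [this, It_add, hrp, ih]
  have hItNp : It φ (N : ℤ) p = p := hItmul N₁
  have hItNnegp : It φ (-(N : ℤ)) p = p := by
    have h2 := congrArg (It φ (-(N : ℤ))) hItNp
    rw [← It_add] at h2
    simpa [It_zero] using h2.symm
  set q : X := It φ (N : ℤ) x with hqdef
  have hqp : dist q p ≤ δ := by
    have := hdN N le_rfl
    rw [hItNp] at this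
    rw [dist_comm]
    exact le_trans this (min_le_right _ _)
  have hqS : q ∈ locS φ p ε := by
    intro n
    have h1 : It φ (n : ℤ) q = It φ ((n + N : ℕ) : ℤ) x := by
      rw [hqdef, ← It_add]; congr 1 <;> omega
    have h2 : It φ (n : ℤ) p = It φ ((n + N : ℕ) : ℤ) p := by
      conv_lhs => rw [← hItNp, ← It_add]
      congr 1 <;> omega
    rw [h1, h2]
    exact le_trans (hdN (n + N) (by omega)) (min_le_left _ _)
  have hqq : q ∈ locU φ q ε := fun n => by rw [dist_self]; exact εpos.le
  -- δ₀ : uniform continuity scale for times up to N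
  obtain ⟨δ₀, δ₀pos, δ₀le, hδ₀⟩ := exists_delta0 φ N δpos
  -- the bracket map
  set β : X → X := fun y =>
    if hy : (locS φ y ε ∩ locU φ q ε).Nonempty then hy.choose else y with hβdef
  have hβ : ∀ y : X, dist y p ≤ δ → β y ∈ locS φ y ε ∩ locU φ q ε := by
    intro y hy
    have hne := hD y q hy hqp
    rw [hβdef]
    simp only [dif_pos hne]
    exact hne.choose_spec
  have huniq : ∀ y w w' : X, w ∈ locS φ y ε ∩ locU φ q ε → w' ∈ locS φ y ε ∩ locU φ q ε →
      w = w' := by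
    intro y w w' hw hw'
    apply hexp2
    intro m
    rcases Int.eq_nat_or_neg m with ⟨k, rfl | rfl⟩
    · calc dist (It φ (k : ℤ) w) (It φ (k : ℤ) w')
          ≤ dist (It φ (k : ℤ) w) (It φ (k : ℤ) y) + dist (It φ (k : ℤ) y) (It φ (k : ℤ) w') := dist_triangle _ _ _
        _ ≤ ε + ε := add_le_add (by rw [dist_comm]; exact hw.1 k) (hw'.1 k)
        _ ≤ εX := by linarith
    · calc dist (It φ (-(k : ℤ)) w) (It φ (-(k : ℤ)) w')
          ≤ dist (It φ (-(k : ℤ)) w) (It φ (-(k : ℤ)) q) + dist (It φ (-(k : ℤ)) q) (It φ (-(k : ℤ)) w') := dist_triangle _ _ _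
        _ ≤ ε + ε := add_le_add (by rw [dist_comm]; exact hw.2 k) (hw'.2 k)
        _ ≤ εX := by linarith
  have hβp : β p = q := huniq p (β p) q (hβ p (by rw [dist_self]; exact δpos.le)) ⟨hqS, hqq⟩
  -- forward iterates up to time N of points of locU p δ₀ stay δ-close to the orbit of p
  have hmem : ∀ z ∈ locU φ p δ₀, It φ (N : ℤ) z ∈ locU φ p δ := by
    intro z hz n
    have hz0 : dist p z ≤ δ₀ := by simpa [It_zero] using hz 0
    rcases le_or_gt n N with hn | hn
    · -- n ≤ N : forward iterate of index N - n
      set m : ℕ := N - n with hmdef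
      have hmN : m ≤ N := Nat.sub_le _ _
      have e1 : It φ (-(n : ℤ)) (It φ (N : ℤ) z) = It φ (m : ℤ) z := by
        rw [← It_add]; congr 1 <;> omega
      have e2 : It φ (-(n : ℤ)) p = It φ (m : ℤ) p := by
        conv_lhs => rw [← hItNp, ← It_add]
        congr 1 <;> omega
      rw [e1, e2]
      exact hδ₀ m hmN p z hz0
    · -- n > N : backward iterate of index n - N
      set m : ℕ := n - N with hmdef
      have e1 : It φ (-(n : ℤ)) (It φ (N : ℤ) z) = It φ (-(m : ℤ)) z := by
        rw [← It_add]; congr 1 <;> omega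
      have e2 : It φ (-(n : ℤ)) p = It φ (-(m : ℤ)) p := by
        conv_rhs => rw [← hItNnegp, ← It_add]
        congr 1 <;> omega
      rw [e1, e2]
      exact le_trans (hz m) δ₀le
  have hmemball : ∀ z ∈ locU φ p δ₀, dist (It φ (N : ℤ) z) p ≤ δ := by
    intro z hz
    have := hmem z hz 0
    simpa [It_zero, dist_comm] using this
  -- the candidate map γ
  set γ : X → X := fun z => It φ (-(N : ℤ)) (β (It φ (N : ℤ) z)) with hγdef
  have hγmapsto : Set.MapsTo γ (locU φ p δ₀) (locU φ x ε) := by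
    intro z hz
    have hβz := (hβ _ (hmemball z hz)).2
    intro n
    have e1 : It φ (-(n : ℤ)) (γ z) = It φ (-((n + N : ℕ) : ℤ)) (β (It φ (N : ℤ) z)) := by
      rw [hγdef]; dsimp only; rw [← It_add]; congr 1 <;> omega
    have e2 : It φ (-(n : ℤ)) x = It φ (-((n + N : ℕ) : ℤ)) q := by
      rw [hqdef, ← It_add]
      congr 1 <;> omega
    rw [e1, e2]
    exact hβz (n + N)
  have hγp : γ p = x := by
    rw [hγdef]
    dsimp only
    rw [hItNp, hβp, hqdef, ← It_add]
    simp [It_zero]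
  -- injectivity
  have hγinj : Set.InjOn γ (locU φ p δ₀) := by
    intro z hz z' hz' heq
    have hβeq : β (It φ (N : ℤ) z) = β (It φ (N : ℤ) z') := by
      have h2 := congrArg (It φ (N : ℤ)) heq
      rw [hγdef] at h2
      dsimp only at h2
      rw [← It_add, ← It_add] at h2
      simpa [It_zero] using h2
    have hw1 : β (It φ (N : ℤ) z) ∈ locS φ (It φ (N : ℤ) z) ε := (hβ _ (hmemball z hz)).1
    have hw2 : β (It φ (N : ℤ) z) ∈ locS φ (It φ (N : ℤ) z') ε := by
      rw [hβeq]; exact (hβ _ (hmemball z' hz')).1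
    apply hexp2
    intro m
    rcases le_or_gt (N : ℤ) m with hm | hm
    · obtain ⟨k, hk⟩ : ∃ k : ℕ, m = (k : ℤ) + (N : ℤ) := ⟨(m - N).toNat, by omega⟩
      subst hk
      rw [It_add, It_add]
      calc dist (It φ (k : ℤ) (It φ (N : ℤ) z)) (It φ (k : ℤ) (It φ (N : ℤ) z'))
          ≤ dist (It φ (k : ℤ) (It φ (N : ℤ) z)) (It φ (k : ℤ) (β (It φ (N : ℤ) z)))
            + dist (It φ (k : ℤ) (β (It φ (N : ℤ) z))) (It φ (k : ℤ) (It φ (N : ℤ) z')) := dist_triangle _ _ _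
        _ ≤ ε + ε := add_le_add (hw1 k) (by rw [dist_comm]; exact hw2 k)
        _ ≤ εX := by linarith
    · rcases le_or_gt m 0 with hm0 | hm0
      · obtain ⟨k, hk⟩ : ∃ k : ℕ, m = -(k : ℤ) := ⟨(-m).toNat, by omega⟩
        subst hk
        calc dist (It φ (-(k : ℤ)) z) (It φ (-(k : ℤ)) z')
            ≤ dist (It φ (-(k : ℤ)) z) (It φ (-(k : ℤ)) p)
              + dist (It φ (-(k : ℤ)) p) (It φ (-(k : ℤ)) z') := dist_triangle _ _ _
          _ ≤ δ₀ + δ₀ := add_le_add (by rw [dist_comm]; exact hz k) (hz' k)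
          _ ≤ εX := by linarith [le_trans δ₀le δle]
      · obtain ⟨k, hk⟩ : ∃ k : ℕ, m = (k : ℤ) := ⟨m.toNat, by omega⟩
        subst hk
        have hkN : k ≤ N := by omega
        have hz0 : dist p z ≤ δ₀ := by simpa [It_zero] using hz 0
        have hz0' : dist p z' ≤ δ₀ := by simpa [It_zero] using hz' 0
        calc dist (It φ (k : ℤ) z) (It φ (k : ℤ) z')
            ≤ dist (It φ (k : ℤ) z) (It φ (k : ℤ) p)
              + dist (It φ (k : ℤ) p) (It φ (k : ℤ) z') := dist_triangle _ _ _
          _ ≤ δ + δ := add_le_add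
              (by rw [dist_comm (It φ (k : ℤ) z)]; exact hδ₀ k hkN p z hz0)
              (hδ₀ k hkN p z' hz0')
          _ ≤ εX := by linarith
  -- continuity of the bracket on the closed ball
  have hβcont : ContinuousOn β (Metric.closedBall p δ) := by
    intro y hy
    rw [Metric.mem_closedBall] at hy
    have hyβ := hβ y hy
    rw [ContinuousWithinAt]
    apply tendsto_of_subseq_tendsto
    intro ns hns
    have hns1 : Tendsto ns atTop (𝓝 y) := hns.mono_right nhdsWithin_le_nhds
    have hnsK : ∀ᶠ k in atTop, ns k ∈ Metric.closedBall p δ := hns self_mem_nhdsWithin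
    obtain ⟨a, -, ms, hms, hconv⟩ :=
      isCompact_univ.tendsto_subseq (fun k => mem_univ (β (ns k)))
    refine ⟨ms, ?_⟩
    have hmsK : ∀ᶠ k in atTop, ns (ms k) ∈ Metric.closedBall p δ :=
      hms.tendsto_atTop.eventually hnsK
    have ha : a ∈ locS φ y ε ∩ locU φ q ε := by
      constructor
      · intro n
        have hlim : Tendsto
            (fun k => dist (It φ (n : ℤ) (ns (ms k))) (It φ (n : ℤ) (β (ns (ms k)))))
            atTop (𝓝 (dist (It φ (n : ℤ) y) (It φ (n : ℤ) a))) := by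
          exact Tendsto.dist
            (((It_continuous φ (n : ℤ)).tendsto y).comp (hns1.comp hms.tendsto_atTop))
            (((It_continuous φ (n : ℤ)).tendsto a).comp hconv)
        refine le_of_tendsto hlim ?_
        filter_upwards [hmsK] with k hk
        exact (hβ _ (Metric.mem_closedBall.mp hk)).1 n
      · intro n
        have hlim : Tendsto
            (fun k => dist (It φ (-(n : ℤ)) q) (It φ (-(n : ℤ)) (β (ns (ms k)))))
            atTop (𝓝 (dist (It φ (-(n : ℤ)) q) (It φ (-(n : ℤ)) a))) := by
          exact Tendsto.dist tendsto_const_nhds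
            (((It_continuous φ (-(n : ℤ))).tendsto a).comp hconv)
        refine le_of_tendsto hlim ?_
        filter_upwards [hmsK] with k hk
        exact (hβ _ (Metric.mem_closedBall.mp hk)).2 n
    have haeq : a = β y := huniq y a (β y) ha hyβ
    rw [← haeq]
    exact hconv
  have hγcont : ContinuousOn γ (locU φ p δ₀) := by
    have hmapsball : Set.MapsTo (It φ (N : ℤ)) (locU φ p δ₀) (Metric.closedBall p δ) := by
      intro z hz
      rw [Metric.mem_closedBall]
      exact hmemball z hz
    have hc1 : ContinuousOn (fun z => β (It φ (N : ℤ) z)) (locU φ p δ₀) :=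
      hβcont.comp (It_continuous φ (N : ℤ)).continuousOn hmapsball
    exact (It_continuous φ (-(N : ℤ))).comp_continuousOn hc1
  -- uniform forward asymptotics
  have hasym : ∀ ε' : ℝ, 0 < ε' → ∃ N' : ℕ, ∀ n : ℕ, N' ≤ n → ∀ z ∈ locU φ p δ₀,
      dist (It φ (n : ℤ)  z) (It φ (n : ℤ) (γ z)) ≤ ε' := by
    intro ε' hε'
    obtain ⟨k₀, hk₀⟩ := exists_pow_lt_of_lt_one (div_pos hε' εpos) lamlt
    have hk₀' : lam ^ k₀ * ε ≤ ε' := ((lt_div_iff₀ εpos).mp hk₀).le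
    refine ⟨N + k₀, fun n hn z hz => ?_⟩
    set y := It φ (N : ℤ) z with hydef
    have hβy := hβ y (hmemball z hz)
    set m : ℕ := n - N with hmdef
    have hmk : k₀ ≤ m := by omega
    have e1 : It φ (n : ℤ) z = It φ (m : ℤ) y := by
      rw [hydef, ← It_add]; congr 1 <;> omega
    have e2 : It φ (n : ℤ) (γ z) = It φ (m : ℤ) (β y) := by
      rw [hγdef]; dsimp only
      rw [← hydef, ← It_add]
      congr 1 <;> omega
    rw [e1, e2]
    have hcon := locS_contract had hεη hβy.1 m
    have hdyβ : dist y (β y) ≤ ε := by simpa [It_zero] using hβy.1 0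
    calc dist (It φ (m : ℤ) y) (It φ (m : ℤ) (β y)) ≤ lam ^ m * dist y (β y) := hcon
      _ ≤ lam ^ k₀ * ε := by
          apply mul_le_mul (pow_le_pow_of_le_one lampos.le lamlt.le hmk) hdyβ dist_nonneg
          positivity
      _ ≤ ε' := hk₀'
  exact ⟨δ₀, ε, γ, δ₀pos, εpos, hγmapsto, hγinj, hγcont, hγp, hasym⟩

/-- for a synchronizing periodic point `p`, stable equivalence
coincides with stable local conjugacy, and likewise for unstable. -/
theorem sync_periodic_lc_classes (φ : X ≃ₜ X) (εX η lam : ℝ)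
    (hexp : IsExpansive φ εX) (had : IsAdapted φ η lam) (p : X)
    (hp : IsPeriodic φ p) (hps : IsSyncPt φ (min η (εX / 2)) p) :
    ∀ x : X, (StableEq φ p x ↔ StableLC φ p x) ∧
      (UnstableEq φ p x ↔ UnstableLC φ p x) := by
  intro x
  constructor
  · exact ⟨fun h => sEq_to_sLC φ εX η lam hexp had p hp hps x h, fun h => sLC_to_sEq φ p x h⟩
  · rw [unstableEq_iff, unstableLC_iff]
    exact ⟨fun h => sEq_to_sLC φ.symm εX η lam (exp_symm hexp) (ad_symm had) p (per_symm hp)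
      (sync_symm hps) x h, fun h => sLC_to_sEq φ.symm p x h⟩

end Paper
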